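/- Consider adaptive gradient descent where stepsizes satisfy α_k ‖∇f(x^k) - ∇f(x^{k-1})‖ ≤ γ ‖x^k - x^{k-1}‖ for γ ∈ (0,1), with x^{k+1} = x^k - α_k ∇f(x^k). Then ‖x^{k+1} - x^k‖² ≤ γ² ‖x^k - x^{k-1}‖² + α_k θ_k (f(x^{k-1}) - f(x^k)), where θ_k = α_k/α_{k-1}. -/

import Mathlib

open scoped RealInnerProductSpace

lemma grad_convex_ineq {d : ℕ}
    (f : EuclideanSpace ℝ (Fin d) → ℝ) (f' : EuclideanSpace ℝ (Fin d) → EuclideanSpace ℝ (Fin d))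
    (hconv : ConvexOn ℝ Set.univ f)
    (hgrad : ∀ z, HasGradientAt f (f' z) z)
    (x y : EuclideanSpace ℝ (Fin d)) :
    f x + ⟪f' x, y - x⟫ ≤ f y := by
  set g : ℝ → ℝ := fun t => f (x + t • (y - x)) with hg
  have hgc : ConvexOn ℝ Set.univ g := by
    have := hconv.comp_affineMap (AffineMap.lineMap x y : ℝ →ᵃ[ℝ] EuclideanSpace ℝ (Fin d))
    simp only [Set.preimage_univ] at this
    convert this using 1
    rfl
    rfl
    rfl
    rfl
    funext t
    simp [hg, AffineMap.lineMap_apply_module]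
    ring_nf
    rw [add_comm]
    congr 1
    module
  have hline : HasDerivAt (fun t : ℝ => x + t • (y - x)) (y - x) (0 : ℝ) := by
    simpa using ((hasDerivAt_id (0 : ℝ)).smul_const (y - x)).const_add x
  have hfd : HasFDerivAt f (InnerProductSpace.toDual ℝ _ (f' (x + (0:ℝ) • (y - x))))
      (x + (0:ℝ) • (y - x)) := (hasGradientAt_iff_hasFDerivAt.mp (hgrad _))
  have hgd : HasDerivAt g ⟪f' x, y - x⟫ (0 : ℝ) := by
    have := hfd.comp_hasDerivAt (0 : ℝ) hline
    simp [hg, real_inner_comm] at this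
    exact this
  have hslope := hgc.le_slope_of_hasDerivAt (Set.mem_univ (0:ℝ)) (Set.mem_univ (1:ℝ))
      zero_lt_one hgd
  have h0 : g 0 = f x := by simp [hg]
  have h1 : g 1 = f y := by simp [hg]
  rw [slope_def_field, h0, h1] at hslope
  have h2 : ⟪f' x, y - x⟫ ≤ f y - f x := by
    norm_num at hslope ⊢
    simpa using hslope
  linarith

theorem adgd_step_decrease {d : ℕ}
    (f : EuclideanSpace ℝ (Fin d) → ℝ) (f' : EuclideanSpace ℝ (Fin d) → EuclideanSpace ℝ (Fin d))
    (hconv : ConvexOn ℝ Set.univ f)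
    (hgrad : ∀ z, HasGradientAt f (f' z) z)
    (γ : ℝ) (hγ : γ ∈ Set.Ioo (0 : ℝ) 1)
    (αp αk : ℝ) (hαp : 0 < αp) (hαk : 0 < αk)
    (xp xk x1 : EuclideanSpace ℝ (Fin d))
    (hxk : xk = xp - αp • f' xp)
    (hx1 : x1 = xk - αk • f' xk)
    (hstep : αk * ‖f' xk - f' xp‖ ≤ γ * ‖xk - xp‖) :
    ‖x1 - xk‖ ^ 2 ≤ γ ^ 2 * ‖xk - xp‖ ^ 2 + αk * (αk / αp) * (f xp - f xk) := by
  set a := f' xk with ha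
  set b := f' xp with hb
  -- monotonicity: ⟪a - b, xk - xp⟫ ≥ 0
  have hmono : 0 ≤ ⟪a - b, xk - xp⟫ := by
    have h1 := grad_convex_ineq f f' hconv hgrad xk xp
    have h2 := grad_convex_ineq f f' hconv hgrad xp xk
    have : ⟪a, xp - xk⟫ + ⟪b, xk - xp⟫ ≤ 0 := by linarith
    have e : ⟪a - b, xk - xp⟫ = -(⟪a, xp - xk⟫ + ⟪b, xk - xp⟫) := by
      rw [inner_sub_left]
      rw [show xp - xk = -(xk - xp) by abel, inner_neg_right]
      ring
    rw [e]; linarith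
  -- xk - xp = -(αp • b)
  have hxkxp : xk - xp = -(αp • b) := by rw [hxk]; abel
  -- convexity inequality
  have hconvi : ⟪a, xp - xk⟫ ≤ f xp - f xk := by
    have := grad_convex_ineq f f' hconv hgrad xk xp
    linarith
  -- ⟪a - b, b⟫ ≤ 0
  have hab : ⟪a - b, b⟫ ≤ 0 := by
    rw [hxkxp, inner_neg_right, inner_smul_right] at hmono
    nlinarith
  -- squared step bound
  have hsq : αk ^ 2 * ‖a - b‖ ^ 2 ≤ γ ^ 2 * ‖xk - xp‖ ^ 2 := by
    have h1 : (0:ℝ) ≤ αk * ‖a - b‖ := by positivity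
    nlinarith
  -- main computation
  have hx1xk : x1 - xk = -(αk • a) := by rw [hx1]; abel
  have hnorm : ‖x1 - xk‖ ^ 2 = αk ^ 2 * ‖a‖ ^ 2 := by
    rw [hx1xk, norm_neg, norm_smul, Real.norm_eq_abs, abs_of_pos hαk, mul_pow]
  have hinner_b : ⟪a, b⟫ ≤ (f xp - f xk) / αp := by
    have e : ⟪a, xp - xk⟫ = αp * ⟪a, b⟫ := by
      rw [show xp - xk = -(xk - xp) by abel, hxkxp, neg_neg, inner_smul_right]
    rw [e] at hconvi
    rw [le_div_iff₀ hαp]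
    linarith
  have hexpand : ‖a‖ ^ 2 = ‖a - b‖ ^ 2 + ⟪a - b, b⟫ + ⟪a, b⟫ := by
    have h1 : ‖a - b‖ ^ 2 = ‖a‖ ^ 2 - 2 * ⟪a, b⟫ + ‖b‖ ^ 2 := by
      rw [← real_inner_self_eq_norm_sq, ← real_inner_self_eq_norm_sq,
        ← real_inner_self_eq_norm_sq, inner_sub_left, inner_sub_right, inner_sub_right,
        real_inner_comm b a]
      ring
    have h2 : ⟪a - b, b⟫ = ⟪a, b⟫ - ‖b‖ ^ 2 := by
      rw [inner_sub_left, real_inner_self_eq_norm_sq]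
    rw [h1, h2]; ring
  rw [hnorm]
  have key : αk ^ 2 * ‖a‖ ^ 2 ≤ γ ^ 2 * ‖xk - xp‖ ^ 2 + αk ^ 2 * ⟪a, b⟫ := by
    nlinarith [sq_nonneg αk]
  have hfin : αk ^ 2 * ⟪a, b⟫ ≤ αk * (αk / αp) * (f xp - f xk) := by
    have e : αk * (αk / αp) * (f xp - f xk) = αk ^ 2 * ((f xp - f xk) / αp) := by
      ring
    rw [e]
    exact mul_le_mul_of_nonneg_left hinner_b (by positivity)
  linarith
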